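/- Let x, y, s, t be integers such that x^2 + s^2 - s^4 = 1 + t^2 and y^2 - 1 - t^2 - t^4 = s^2. Then (x,y,s,t) = (±1, ±1, 0, 0). -/
import Mathlib

private lemma aux_sq_eq_pow4_add_one (a b : ℤ) (h : a^2 = b^4 + 1) : b = 0 := by
  have h1 : (b^2)^2 < a^2 := by nlinarith [sq_nonneg b]
  have h2 : b^2 < |a| := by
    nlinarith [sq_abs a, abs_nonneg a, sq_nonneg b]
  have h3 : b^2 + 1 ≤ |a| := h2
  have h4 : (b^2 + 1)^2 ≤ a^2 := by
    nlinarith [sq_abs a, abs_nonneg a]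
  have h5 : b^2 ≤ 0 := by nlinarith
  have : b^2 = 0 := le_antisymm h5 (sq_nonneg b)
  exact pow_eq_zero_iff (by norm_num) |>.mp this

theorem stmt_11 (x y s t : ℤ)
    (h1 : x^2 + s^2 - s^4 = 1 + t^2) (h2 : y^2 - 1 - t^2 - t^4 = s^2) :
    (x = 1 ∨ x = -1) ∧ (y = 1 ∨ y = -1) ∧ s = 0 ∧ t = 0 := by
  have hx2 : x^2 = s^4 - s^2 + t^2 + 1 := by linarith
  have hy2 : y^2 = t^4 + t^2 + 1 + s^2 := by linarith
  -- Step 1 : t^2 ≤ s^2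
  have step1 : t^2 ≤ s^2 := by
    have h3 : (t^2)^2 < y^2 := by nlinarith [sq_nonneg s, sq_nonneg t]
    have h4 : t^2 < |y| := by nlinarith [sq_abs y, abs_nonneg y, sq_nonneg t]
    have h5 : t^2 + 1 ≤ |y| := h4
    have h6 : (t^2 + 1)^2 ≤ y^2 := by nlinarith [sq_abs y, abs_nonneg y]
    nlinarith
  -- Step 2 : s^2 ≤ t^2 + 1
  have step2 : s^2 ≤ t^2 + 1 := by
    by_contra hc
    push_neg at hc
    have hs2 : t^2 + 2 ≤ s^2 := by omega
    have hxlt : x^2 < (s^2)^2 := by nlinarith [sq_nonneg t]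
    have hxgt : (s^2 - 1)^2 < x^2 := by nlinarith [sq_nonneg s, sq_nonneg t]
    have hsn : (0:ℤ) ≤ s^2 - 1 := by nlinarith [sq_nonneg t]
    have hlb : s^2 - 1 < |x| := by nlinarith [sq_abs x, abs_nonneg x]
    have hub : |x| < s^2 := by nlinarith [sq_abs x, abs_nonneg x]
    omega
  have hcase : s^2 = t^2 ∨ s^2 = t^2 + 1 := by omega
  rcases hcase with hcase | hcase
  · -- x^2 = s^4 + 1
    have hx4 : x^2 = s^4 + 1 := by nlinarith
    have hs0 : s = 0 := aux_sq_eq_pow4_add_one x s hx4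
    have ht0 : t = 0 := by
      have : t^2 = 0 := by rw [hs0] at hcase; simpa using hcase.symm
      exact pow_eq_zero_iff (by norm_num) |>.mp this
    subst hs0 ht0
    have hx1 : (x - 1) * (x + 1) = 0 := by nlinarith
    have hy1 : (y - 1) * (y + 1) = 0 := by nlinarith
    rcases mul_eq_zero.mp hx1 with h | h <;> rcases mul_eq_zero.mp hy1 with h' | h' <;>
      refine ⟨?_, ?_, rfl, rfl⟩ <;> omega
  · -- y^2 = s^4 + 1, contradiction
    have ht2 : t^2 = s^2 - 1 := by omega
    have hy4 : y^2 = s^4 + 1 := by nlinarith [sq_nonneg t]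
    have hs0 : s = 0 := aux_sq_eq_pow4_add_one y s hy4
    rw [hs0] at hcase
    nlinarith [sq_nonneg t]
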